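/- Let N be a 3-dimensional nonunital commutative associative ℂ-algebra such that every product of three elements of N is zero, the subspace N² = span_ℂ{x·y : x, y ∈ N} is 1-dimensional, and the annihilator {x ∈ N : x·y = 0 for all y ∈ N} equals N² (i.e. the induced quadratic form on N/N² with values in N² is nondegenerate). Then N is isomorphic to the model algebra I_{2,2}, i.e. the 3-dimensional nonunital ℂ-algebra with basis u, v, w and products u·v = v·u = w and all other products of basis vectors zero. -/

import Mathlib

/-- The multiplication of the model algebra `I_{2,2} = 𝔪_{x,y}/(x², y²)` with basis
`u, v, w`: `u·v = v·u = w`, all other products of basis vectors zero. -/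
def mulI22 (p q : Fin 3 → ℂ) : Fin 3 → ℂ :=
  ![0, 0, p 0 * q 1 + p 1 * q 0]

/-- A 3-dimensional nonunital commutative associative `ℂ`-algebra with vanishing triple
products, 1-dimensional square `N²`, and annihilator equal to `N²` (nondegenerate
induced quadratic form) is isomorphic to the model algebra `I_{2,2}`. -/
theorem iso_I22_of_nondegenerate
    (N : Type*) [NonUnitalCommRing N] [Module ℂ N]
    [SMulCommClass ℂ N N] [IsScalarTower ℂ N N] [Module.Finite ℂ N]
    (hdim : Module.finrank ℂ N = 3)
    (htriple : ∀ x y z : N, x * y * z = 0)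
    (hsq : Module.finrank ℂ
      ↥(Submodule.span ℂ {z : N | ∃ x y : N, z = x * y}) = 1)
    (hann : {x : N | ∀ y : N, x * y = 0}
      = ↑(Submodule.span ℂ {z : N | ∃ x y : N, z = x * y})) :
    ∃ e : N ≃ₗ[ℂ] (Fin 3 → ℂ),
      ∀ x y : N, e (x * y) = mulI22 (e x) (e y) := by
  classical
  set S := Submodule.span ℂ {z : N | ∃ x y : N, z = x * y} with hSdef
  -- elements of S annihilate everything
  have hannS : ∀ s : N, s ∈ S → ∀ y : N, s * y = 0 := by
    intro s hs y
    have hs' : s ∈ {x : N | ∀ y : N, x * y = 0} := hann.symm ▸ (hs : s ∈ (S : Set N))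
    exact hs' y
  -- a generator of S
  obtain ⟨w0, hw0ne, hw0span⟩ := (finrank_eq_one_iff' (K := ℂ) (V := ↥S)).mp hsq
  set w : N := (w0 : N) with hwdef
  have hwS : w ∈ S := w0.2
  have hwne : w ≠ 0 := fun h => hw0ne (Subtype.ext h)
  have hwmul : ∀ y : N, w * y = 0 := hannS w hwS
  have hmulw : ∀ y : N, y * w = 0 := fun y => by rw [mul_comm]; exact hwmul y
  have hSspan : ∀ s : N, s ∈ S → ∃ c : ℂ, s = c • w := by
    intro s hs
    obtain ⟨c, hc⟩ := hw0span ⟨s, hs⟩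
    refine ⟨c, ?_⟩
    have := congrArg (Subtype.val) hc
    simpa [hwdef] using this.symm
  have hmulS : ∀ p q : N, p * q ∈ S := fun p q => Submodule.subset_span ⟨p, q, rfl⟩
  have hB : ∀ p q : N, ∃ c : ℂ, p * q = c • w := fun p q => hSspan _ (hmulS p q)
  have huniq : ∀ c c' : ℂ, c • w = c' • w → c = c' := by
    intro c c' h
    have h2 : (c - c') • w = 0 := by rw [sub_smul, h, sub_self]
    rcases smul_eq_zero.mp h2 with h3 | h3
    · exact sub_eq_zero.mp h3
    · exact absurd h3 hwne
  -- S is the span of w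
  have hSw : S = Submodule.span ℂ {w} := by
    refine (Submodule.eq_of_le_of_finrank_eq ?_ ?_).symm
    · rw [Submodule.span_le, Set.singleton_subset_iff]; exact hwS
    · rw [finrank_span_singleton hwne, hsq]
  -- there exist elements outside small subspaces
  have hex : ∀ T : Submodule ℂ N, Module.finrank ℂ ↥T < 3 → ∃ x : N, x ∉ T := by
    intro T hT
    by_contra h
    push_neg at h
    have hTeq : T = ⊤ := Submodule.eq_top_iff'.mpr h
    rw [hTeq, finrank_top, hdim] at hT
    exact lt_irrefl 3 hT
  -- pick x ∉ S
  obtain ⟨x, hxS⟩ := hex S (by rw [hsq]; norm_num)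
  have hxne : x ≠ 0 := fun h => hxS (h ▸ S.zero_mem)
  -- the subspace spanned by w and x
  set T : Submodule ℂ N := Submodule.span ℂ {w, x} with hTdef
  have hST : S ≤ T := by
    rw [hSw]
    exact Submodule.span_mono (Set.singleton_subset_iff.mpr (Set.mem_insert _ _))
  have hxT : x ∈ T := Submodule.subset_span (Set.mem_insert_of_mem _ rfl)
  have hwT : w ∈ T := Submodule.subset_span (Set.mem_insert _ _)
  have hTrank : Module.finrank ℂ ↥T < 3 := by
    have h1 : T = (Submodule.span ℂ {w}) ⊔ (Submodule.span ℂ {x}) := by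
      rw [hTdef, Submodule.span_insert]
    have h2 : Module.finrank ℂ ↥T ≤
        Module.finrank ℂ ↥(Submodule.span ℂ {w}) + Module.finrank ℂ ↥(Submodule.span ℂ {x}) := by
      rw [h1]
      have := Submodule.finrank_sup_add_finrank_inf_eq
        (Submodule.span ℂ {w}) (Submodule.span ℂ {x})
      omega
    rw [finrank_span_singleton hwne, finrank_span_singleton hxne] at h2
    omega
  -- Claim A : there is an isotropic element outside S
  have claimA : ∃ u : N, u ∉ S ∧ u * u = 0 := by
    obtain ⟨s, hs⟩ := hB x x
    by_cases hs0 : s = 0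
    · exact ⟨x, hxS, by rw [hs, hs0, zero_smul]⟩
    · -- pick y outside T
      obtain ⟨y, hyT⟩ := hex T hTrank
      obtain ⟨r, hr⟩ := hB x y
      set b : N := y - (r / s) • x with hbdef
      have hbT : b ∉ T := by
        intro hb
        exact hyT (by
          have : y = b + (r / s) • x := by rw [hbdef]; ring_nf; abel
          rw [this]
          exact T.add_mem hb (T.smul_mem _ hxT))
      have hxb : x * b = 0 := by
        rw [hbdef, mul_sub, mul_smul_comm, hr, hs, smul_smul, div_mul_cancel₀ _ hs0, sub_self]
      have hbx : b * x = 0 := by rw [mul_comm]; exact hxb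
      obtain ⟨t, ht⟩ := hB b b
      by_cases ht0 : t = 0
      · exact ⟨b, fun h => hbT (hST h), by rw [ht, ht0, zero_smul]⟩
      · -- both s and t nonzero : build isotropic vector
        obtain ⟨σ, hσ⟩ := IsAlgClosed.exists_pow_nat_eq (k := ℂ) s (n := 2) (by norm_num)
        obtain ⟨τ, hτ⟩ := IsAlgClosed.exists_pow_nat_eq (k := ℂ) t (n := 2) (by norm_num)
        have hσ0 : σ ≠ 0 := fun h => hs0 (by rw [← hσ, h]; ring)
        set u : N := τ • x + (σ * Complex.I) • b with hudef
        have huS : u ∉ S := by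
          intro hu
          have huT : u ∈ T := hST hu
          have : (σ * Complex.I) • b ∈ T := by
            have : (σ * Complex.I) • b = u - τ • x := by rw [hudef]; abel
            rw [this]
            exact T.sub_mem huT (T.smul_mem _ hxT)
          have hb : b ∈ T := by
            have h9 : ((σ * Complex.I)⁻¹ * (σ * Complex.I)) • b ∈ T := by
              rw [mul_smul]; exact T.smul_mem _ this
            rwa [inv_mul_cancel₀ (by simp [hσ0, Complex.I_ne_zero]), one_smul] at h9
          exact hbT hb
        refine ⟨u, huS, ?_⟩
        have hexp : u * u = (τ * τ * s + (σ * Complex.I) * (σ * Complex.I) * t) • w := by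
          rw [hudef]
          simp only [add_mul, mul_add, smul_mul_assoc, mul_smul_comm, smul_smul, hs, ht,
            hxb, hbx, smul_zero, add_zero, zero_add]
          rw [← add_smul]
          congr 1
          ring
        rw [hexp]
        have hcoef : τ * τ * s + (σ * Complex.I) * (σ * Complex.I) * t = 0 := by
          have h1 : σ * σ = s := by rw [← hσ]; ring
          have h2 : τ * τ = t := by rw [← hτ]; ring
          have : (σ * Complex.I) * (σ * Complex.I) = (σ * σ) * (Complex.I * Complex.I) := by ring
          rw [this, Complex.I_mul_I, h1, h2]
          ring
        rw [hcoef, zero_smul]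
  obtain ⟨u, huS, huu⟩ := claimA
  -- Claim B : find v with u*v = w and v*v = 0
  have huAnn : ¬ ∀ y : N, u * y = 0 := by
    intro h
    have h2 : u ∈ {x : N | ∀ y : N, x * y = 0} := h
    rw [hann] at h2
    exact huS h2
  push_neg at huAnn
  obtain ⟨z, hz⟩ := huAnn
  obtain ⟨c, hc⟩ := hB u z
  have hc0 : c ≠ 0 := fun h => hz (by rw [hc, h, zero_smul])
  set v0 : N := c⁻¹ • z with hv0def
  have huv0 : u * v0 = w := by
    rw [hv0def, mul_smul_comm, hc, smul_smul, inv_mul_cancel₀ hc0, one_smul]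
  obtain ⟨d, hd⟩ := hB v0 v0
  set v : N := v0 - (d / 2) • u with hvdef
  have huv : u * v = w := by
    rw [hvdef, mul_sub, huv0, mul_smul_comm, huu, smul_zero, sub_zero]
  have hvu : v * u = w := by rw [mul_comm]; exact huv
  have hv0u : v0 * u = w := by rw [mul_comm]; exact huv0
  have hvv : v * v = 0 := by
    rw [hvdef]
    simp only [sub_mul, mul_sub, smul_mul_assoc, mul_smul_comm, smul_smul, hd, huv0, hv0u, huu,
      smul_zero]
    module
  -- linear independence of u, v, w
  have hli : LinearIndependent ℂ ![u, v, w] := by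
    rw [Fintype.linearIndependent_iff]
    intro g hg
    rw [Fin.sum_univ_three] at hg
    simp only [Matrix.cons_val_zero, Matrix.cons_val_one, Matrix.head_cons,
      Matrix.cons_val_two, Matrix.tail_cons] at hg
    have hsm : ∀ c : ℂ, c • w = 0 → c = 0 := by
      intro c h
      rcases smul_eq_zero.mp h with h | h
      · exact h
      · exact absurd h hwne
    have h0 : g 0 = 0 := by
      have h1 := congrArg (· * v) hg
      simp only [add_mul, smul_mul_assoc, huv, hvv, hwmul, smul_zero, add_zero, zero_mul] at h1
      exact hsm _ h1
    have h1 : g 1 = 0 := by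
      have h1 := congrArg (· * u) hg
      simp only [add_mul, smul_mul_assoc, huu, hvu, hwmul, smul_zero, add_zero, zero_add,
        zero_mul] at h1
      exact hsm _ h1
    have h2 : g 2 = 0 := by
      rw [h0, h1, zero_smul, zero_smul, zero_add, zero_add] at hg
      exact hsm _ hg
    intro i
    fin_cases i <;> assumption
  -- the basis
  have hcard : Fintype.card (Fin 3) = Module.finrank ℂ N := by simp [hdim]
  set bb : Module.Basis (Fin 3) ℂ N := basisOfLinearIndependentOfCardEqFinrank hli hcard with hbbdef
  have hbb : ∀ i, bb i = ![u, v, w] i := by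
    intro i
    rw [hbbdef, coe_basisOfLinearIndependentOfCardEqFinrank]
  have hbb0 : bb 0 = u := hbb 0
  have hbb1 : bb 1 = v := hbb 1
  have hbb2 : bb 2 = w := hbb 2
  refine ⟨bb.equivFun, ?_⟩
  intro p q
  set e := bb.equivFun with hedef
  have huw : u * w = 0 := hmulw u
  have hvw : v * w = 0 := hmulw v
  have hww : w * w = 0 := hmulw w
  have hwu : w * u = 0 := hwmul u
  have hwv : w * v = 0 := hwmul v
  have key : ∀ a0 a1 a2 b0 b1 b2 : ℂ,
      (a0 • u + a1 • v + a2 • w) * (b0 • u + b1 • v + b2 • w) = (a0 * b1 + a1 * b0) • w := by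
    intro a0 a1 a2 b0 b1 b2
    simp only [add_mul, mul_add, smul_mul_assoc, mul_smul_comm, smul_smul, huu, hvv, huv, hvu,
      huw, hvw, hww, hwu, hwv, smul_zero, add_zero, zero_add]
    module
  have hp : p = e p 0 • u + e p 1 • v + e p 2 • w := by
    conv_lhs => rw [← bb.sum_equivFun p]
    rw [Fin.sum_univ_three, hbb0, hbb1, hbb2]
  have hq : q = e q 0 • u + e q 1 • v + e q 2 • w := by
    conv_lhs => rw [← bb.sum_equivFun q]
    rw [Fin.sum_univ_three, hbb0, hbb1, hbb2]
  have hpq : p * q = (e p 0 * e q 1 + e p 1 * e q 0) • w := by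
    conv_lhs => rw [hp, hq]
    exact key _ _ _ _ _ _
  have hew : ∀ j, e w j = if (2 : Fin 3) = j then 1 else 0 := by
    intro j
    rw [← hbb2]
    exact bb.equivFun_self 2 j
  funext j
  rw [hpq, map_smul, Pi.smul_apply, hew j]
  fin_cases j <;> simp [mulI22]
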